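/- Let C be a small category with a terminal object, let I be a separating interval of the presheaf category Ĉ, and let j: I → J be a monomorphism of intervals. For a presheaf X on C, let X_0 denote the constant presheaf at the set X(terminal) and let 𝒥(X) be the pushout of X × I ← X_0 × I → X_0 × J. Then 𝒥, equipped with the natural transformations ∂^ε_X: X ≅ X × {ε} → X × I → 𝒥(X) (ε = 0,1) and σ_X: 𝒥(X) ⊆ X × J → X (induced by the first projection), is a functorial cylinder on C which is moreover an elementary homotopical datum: 𝒥 preserves small colimits and monomorphisms, and for every monomorphism K → L and ε = 0,1 the naturality square with vertical arrows ∂^ε_K and ∂^ε_L is a pullback. -/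

import Mathlib

/-!
STATEMENT 2 (Proposition 3.6 of the paper).  Let `C` be a small category with a
terminal object, `I` a separating interval of the presheaf category `Ĉ` and
`j : I ⟶ J` a monomorphism of intervals.  For a presheaf `X`, let `X₀` be the
constant presheaf at `X(terminal)` and let `𝒥(X)` be the pushout of
`X × I ← X₀ × I → X₀ × J`.  Then `𝒥`, with the indicated structure maps, is a
functorial cylinder on `C` which is an elementary homotopical datum.
-/

open CategoryTheory CategoryTheory.Limits Opposite

universe u

namespace Paper

variable {C : Type u} [SmallCategory C] [HasTerminal C]

/-- The category of presheaves of sets on a small category. -/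
abbrev Psh (A : Type u) [SmallCategory A] := Aᵒᵖ ⥤ Type u

/-- The constant presheaf at a set `S`. -/
def constPsh (S : Type u) : Psh C := (Functor.const _).obj S

/-- The map of constant presheaves induced by a map of sets. -/
def constMap {S S' : Type u} (φ : S → S') : (constPsh (C := C) S) ⟶ constPsh S' where
  app _ := TypeCat.ofHom φ

/-- `X₀`: the constant presheaf at the set `X(terminal)`. -/
def zeroth (X : Psh C) : Psh C := constPsh (X.obj (op (⊤_ C)))

/-- The canonical morphism `i_X : X₀ ⟶ X`. -/
noncomputable def iX (X : Psh C) : zeroth X ⟶ X where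
  app c := TypeCat.ofHom (fun s => X.map (terminal.from c.unop).op s)
  naturality c d f := by
    ext s
    have h : (terminal.from (unop c)).op ≫ f = (terminal.from (unop d)).op := by
      apply Quiver.Hom.unop_inj
      apply terminal.hom_ext
    rw [← h, Functor.map_comp]
    rfl

variable (I J : Psh C) (j : I ⟶ J)

/-- The cylinder object `𝒥(X) = (X × I) ⊔_{X₀ × I} (X₀ × J)`. -/
noncomputable def cylObj (X : Psh C) : Psh C :=
  pushout (prod.map (iX X) (𝟙 I)) (prod.map (𝟙 (zeroth X)) j)

/-- The morphism `X₀ ⟶ Y₀` induced by `u : X ⟶ Y`. -/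
noncomputable def zerothMap {X Y : Psh C} (u : X ⟶ Y) : zeroth X ⟶ zeroth Y :=
  constMap (u.app (op (⊤_ C)))

lemma iX_natural {X Y : Psh C} (u : X ⟶ Y) :
    zerothMap u ≫ iX Y = iX X ≫ u := by
  ext c s
  exact (NatTrans.naturality_apply u (terminal.from c.unop).op s).symm

lemma zerothMap_id (X : Psh C) : zerothMap (𝟙 X) = 𝟙 (zeroth X) := rfl

lemma zerothMap_comp {X Y Z : Psh C} (u : X ⟶ Y) (v : Y ⟶ Z) :
    zerothMap (u ≫ v) = zerothMap u ≫ zerothMap v := rfl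

/-- Functoriality of `𝒥` on morphisms. -/
noncomputable def cylMap {X Y : Psh C} (u : X ⟶ Y) : cylObj I J j X ⟶ cylObj I J j Y :=
  pushout.desc (prod.map u (𝟙 I) ≫ pushout.inl _ _)
    (prod.map (zerothMap u) (𝟙 J) ≫ pushout.inr _ _)
    (by
      calc prod.map (iX X) (𝟙 I) ≫ prod.map u (𝟙 I) ≫ pushout.inl _ _
          = prod.map (zerothMap u) (𝟙 I) ≫ prod.map (iX Y) (𝟙 I) ≫ pushout.inl _ _ := by
            rw [← Category.assoc, ← Category.assoc, prod.map_map, prod.map_map, iX_natural]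
        _ = prod.map (zerothMap u) (𝟙 I) ≫ prod.map (𝟙 _) j ≫ pushout.inr _ _ := by
            rw [pushout.condition]
        _ = prod.map (𝟙 _) j ≫ prod.map (zerothMap u) (𝟙 J) ≫ pushout.inr _ _ := by
            rw [← Category.assoc, ← Category.assoc, prod.map_map, prod.map_map,
              Category.comp_id, Category.id_comp, Category.comp_id, Category.id_comp])

/-- The functorial cylinder `𝒥 : Ĉ ⥤ Ĉ`. -/
noncomputable def cyl : Psh C ⥤ Psh C where
  obj := cylObj I J j
  map := cylMap I J j
  map_id X := by
    dsimp only [cylObj]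
    apply pushout.hom_ext
    · erw [pushout.inl_desc, prod.map_id_id, Category.id_comp]
    · erw [pushout.inr_desc, zerothMap_id, prod.map_id_id, Category.id_comp]
  map_comp {X Y Z} u v := by
    apply pushout.hom_ext
    · erw [pushout.inl_desc, pushout.inl_desc_assoc, Category.assoc, pushout.inl_desc,
        prod.map_map_assoc, Category.comp_id]
    · erw [pushout.inr_desc, pushout.inr_desc_assoc, Category.assoc, pushout.inr_desc,
        prod.map_map_assoc, Category.comp_id, zerothMap_comp]

/-- The end inclusion `∂ε_X : X ⟶ 𝒥(X)`, for `ε = 0, 1` given by the two points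
`e : ⊤ ⟶ I` of the interval. -/
noncomputable def cylIncl (e : ⊤_ (Psh C) ⟶ I) (X : Psh C) : X ⟶ cylObj I J j X :=
  prod.lift (𝟙 X) (terminal.from X ≫ e) ≫ pushout.inl _ _

/-- The projection `σ_X : 𝒥(X) ⟶ X` (restriction of the first projection
`X × J ⟶ X`). -/
noncomputable def cylProj (X : Psh C) : cylObj I J j X ⟶ X :=
  pushout.desc prod.fst (prod.fst ≫ iX X)
    (by rw [prod.map_fst, ← Category.assoc, prod.map_fst, Category.assoc,
          Category.id_comp])

namespace TypeAux


variable {S A B : Type u} {f : S ⟶ A} {g : S ⟶ B}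

/-- comparison iso between an abstract pushout cocone (flipped) and the concrete type pushout -/
noncomputable def e {c : PushoutCocone f g} (hc : IsColimit c) : c.pt ≅ Types.Pushout g f :=
  (PushoutCocone.flipIsColimit hc).coconePointUniqueUpToIso (Types.Pushout.isColimitCocone g f)

lemma e_inr {c : PushoutCocone f g} (hc : IsColimit c) (b : B) :
    (e hc).hom (c.inr b) = Types.Pushout.inl g f b :=
  ConcreteCategory.congr_hom ((PushoutCocone.flipIsColimit hc).comp_coconePointUniqueUpToIso_hom
    (Types.Pushout.isColimitCocone g f) WalkingSpan.left) b

lemma e_inl {c : PushoutCocone f g} (hc : IsColimit c) (a : A) :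
    (e hc).hom (c.inl a) = Types.Pushout.inr g f a :=
  ConcreteCategory.congr_hom ((PushoutCocone.flipIsColimit hc).comp_coconePointUniqueUpToIso_hom
    (Types.Pushout.isColimitCocone g f) WalkingSpan.right) a

variable (hg : Function.Injective g) {c : PushoutCocone f g} (hc : IsColimit c)

include hg hc

lemma inl_injective : Function.Injective c.inl := by
  haveI : Mono g := (mono_iff_injective g).2 hg
  intro a a' h
  have h2 : Types.Pushout.inr g f a = Types.Pushout.inr g f a' := by
    rw [← e_inl hc, ← e_inl hc, h]
  have h3 := (Types.Pushout.quot_mk_eq_iff g f (Sum.inr a) (Sum.inr a')).1 h2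
  rwa [Types.Pushout.inr_rel'_inr_iff] at h3

lemma inl_eq_inr_iff (a : A) (b : B) :
    c.inl a = c.inr b ↔ ∃ s, f s = a ∧ g s = b := by
  haveI : Mono g := (mono_iff_injective g).2 hg
  constructor
  · intro h
    have h2 : Types.Pushout.inl g f b = Types.Pushout.inr g f a := by
      rw [← e_inl hc, ← e_inr hc, h]
    rw [Types.Pushout.inl_eq_inr_iff] at h2
    obtain ⟨s, hs1, hs2⟩ := h2
    exact ⟨s, hs2, hs1⟩
  · rintro ⟨s, rfl, rfl⟩
    exact ConcreteCategory.congr_hom c.condition s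

lemma inr_eq_inr (b b' : B) (h : c.inr b = c.inr b') :
    b = b' ∨ ∃ s s', f s = f s' ∧ g s = b ∧ g s' = b' := by
  haveI : Mono g := (mono_iff_injective g).2 hg
  have h2 : Types.Pushout.inl g f b = Types.Pushout.inl g f b' := by
    rw [← e_inr hc, ← e_inr hc, h]
  have h3 := (Types.Pushout.quot_mk_eq_iff g f (Sum.inl b) (Sum.inl b')).1 h2
  rw [Types.Pushout.inl_rel'_inl_iff] at h3
  obtain rfl | ⟨x₀, y₀, hx, h4, h5⟩ := h3
  · exact Or.inl rfl
  · exact Or.inr ⟨x₀, y₀, hx, h4.symm, h5.symm⟩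

omit hg in
lemma pt_cases (z : c.pt) : (∃ a, c.inl a = z) ∨ ∃ b, c.inr b = z := by
  obtain ⟨w, hw⟩ := Quot.exists_rep ((e hc).hom z)
  cases w with
  | inl b =>
    refine Or.inr ⟨b, (e hc).toEquiv.injective (?_ : (e hc).hom _ = (e hc).hom z)⟩
    rw [e_inr hc]
    exact hw
  | inr a =>
    refine Or.inl ⟨a, (e hc).toEquiv.injective (?_ : (e hc).hom _ = (e hc).hom z)⟩
    rw [e_inl hc]
    exact hw

end TypeAux

/-! ### Auxiliary machinery: elementwise helpers -/

section ElementHelpers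

lemma map_fst_apply {X X' Y Y' : Psh C} (u : X ⟶ X') (v : Y ⟶ Y') (c : Cᵒᵖ) (p : (X ⨯ Y).obj c) :
    (prod.fst (X := X') (Y := Y')).app c ((prod.map u v).app c p)
      = u.app c ((prod.fst (X := X) (Y := Y)).app c p) :=
  ConcreteCategory.congr_hom (NatTrans.congr_app (Limits.prod.map_fst u v) c) p

lemma map_snd_apply {X X' Y Y' : Psh C} (u : X ⟶ X') (v : Y ⟶ Y') (c : Cᵒᵖ) (p : (X ⨯ Y).obj c) :
    (prod.snd (X := X') (Y := Y')).app c ((prod.map u v).app c p)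
      = v.app c ((prod.snd (X := X) (Y := Y)).app c p) :=
  ConcreteCategory.congr_hom (NatTrans.congr_app (Limits.prod.map_snd u v) c) p

lemma lift_fst_apply {Z X Y : Psh C} (u : Z ⟶ X) (v : Z ⟶ Y) (c : Cᵒᵖ) (z : Z.obj c) :
    (prod.fst (X := X) (Y := Y)).app c ((prod.lift u v).app c z) = u.app c z :=
  ConcreteCategory.congr_hom (NatTrans.congr_app (Limits.prod.lift_fst u v) c) z

lemma lift_snd_apply {Z X Y : Psh C} (u : Z ⟶ X) (v : Z ⟶ Y) (c : Cᵒᵖ) (z : Z.obj c) :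
    (prod.snd (X := X) (Y := Y)).app c ((prod.lift u v).app c z) = v.app c z :=
  ConcreteCategory.congr_hom (NatTrans.congr_app (Limits.prod.lift_snd u v) c) z

lemma pushout_cond_apply {S A B : Psh C} (F : S ⟶ A) (G : S ⟶ B) (c : Cᵒᵖ) (s : S.obj c) :
    (pushout.inl F G).app c (F.app c s) = (pushout.inr F G).app c (G.app c s) :=
  ConcreteCategory.congr_hom (NatTrans.congr_app (pushout.condition (f := F) (g := G)) c) s

lemma inl_desc_apply {S A B T : Psh C} (F : S ⟶ A) (G : S ⟶ B) (h : A ⟶ T) (k : B ⟶ T)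
    (w : F ≫ h = G ≫ k) (c : Cᵒᵖ) (a : A.obj c) :
    (pushout.desc h k w).app c ((pushout.inl F G).app c a) = h.app c a :=
  ConcreteCategory.congr_hom (NatTrans.congr_app (pushout.inl_desc h k w) c) a

lemma inr_desc_apply {S A B T : Psh C} (F : S ⟶ A) (G : S ⟶ B) (h : A ⟶ T) (k : B ⟶ T)
    (w : F ≫ h = G ≫ k) (c : Cᵒᵖ) (b : B.obj c) :
    (pushout.desc h k w).app c ((pushout.inr F G).app c b) = k.app c b :=
  ConcreteCategory.congr_hom (NatTrans.congr_app (pushout.inr_desc h k w) c) b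

lemma app_apply_eq {F G : Psh C} (φ : F ⟶ G) {d : C} (x : F.obj (op d)) :
    φ.app (op d) x = yonedaEquiv (yonedaEquiv.symm x ≫ φ) := by
  rw [yonedaEquiv_comp, Equiv.apply_symm_apply]

lemma prod_elem_ext {X Y : Psh C} {c : Cᵒᵖ} {p q : (X ⨯ Y).obj c}
    (h1 : (prod.fst (X := X) (Y := Y)).app c p = (prod.fst (X := X) (Y := Y)).app c q)
    (h2 : (prod.snd (X := X) (Y := Y)).app c p = (prod.snd (X := X) (Y := Y)).app c q) :
    p = q := by
  obtain ⟨d⟩ := c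
  have key : (yonedaEquiv.symm p : yoneda.obj d ⟶ X ⨯ Y) = yonedaEquiv.symm q := by
    apply Limits.prod.hom_ext
    · apply yonedaEquiv.injective
      rw [yonedaEquiv_comp, yonedaEquiv_comp, Equiv.apply_symm_apply, Equiv.apply_symm_apply]
      exact h1
    · apply yonedaEquiv.injective
      rw [yonedaEquiv_comp, yonedaEquiv_comp, Equiv.apply_symm_apply, Equiv.apply_symm_apply]
      exact h2
  have := congr_arg yonedaEquiv key
  rwa [Equiv.apply_symm_apply, Equiv.apply_symm_apply] at this

lemma prod_elem_mk {X Y : Psh C} {c : Cᵒᵖ} (x : X.obj c) (y : Y.obj c) :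
    ∃ p : (X ⨯ Y).obj c,
      (prod.fst (X := X) (Y := Y)).app c p = x ∧ (prod.snd (X := X) (Y := Y)).app c p = y := by
  obtain ⟨d⟩ := c
  refine ⟨yonedaEquiv (prod.lift (yonedaEquiv.symm x) (yonedaEquiv.symm y)), ?_, ?_⟩
  · rw [app_apply_eq, Equiv.symm_apply_apply, prod.lift_fst, Equiv.apply_symm_apply]
  · rw [app_apply_eq, Equiv.symm_apply_apply, prod.lift_snd, Equiv.apply_symm_apply]

end ElementHelpers


set_option linter.unusedSectionVars false

section PtPushout

/-- The pointwise pushout cocone of `cylObj` is a colimit. -/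
noncomputable def ptis (X : Psh C) (c : Cᵒᵖ) :=
  isColimitOfHasPushoutOfPreservesColimit ((evaluation Cᵒᵖ (Type u)).obj c)
    (prod.map (iX X) (𝟙 I)) (prod.map (𝟙 (zeroth X)) j)

variable {I J j}

lemma injG (hj : Mono j) (X : Psh C) (c : Cᵒᵖ) :
    Function.Injective ((prod.map (𝟙 (zeroth X)) j).app c) := by
  intro b b' h
  refine prod_elem_ext ?_ ?_
  · have h1 := congr_arg ((prod.fst (X := zeroth X) (Y := J)).app c) h
    rw [map_fst_apply, map_fst_apply] at h1
    simpa using h1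
  · have h2 := congr_arg ((prod.snd (X := zeroth X) (Y := J)).app c) h
    rw [map_snd_apply, map_snd_apply] at h2
    exact (mono_iff_injective (j.app c)).1 inferInstance h2

lemma inl_app_injective (hj : Mono j) (X : Psh C) (c : Cᵒᵖ) :
    Function.Injective
      ((pushout.inl (prod.map (iX X) (𝟙 I)) (prod.map (𝟙 (zeroth X)) j)).app c) :=
  TypeAux.inl_injective (injG hj X c) (ptis I J j X c)

lemma inl_eq_inr_iff_app (hj : Mono j) (X : Psh C) (c : Cᵒᵖ)
    (a : (X ⨯ I).obj c) (b : (zeroth X ⨯ J).obj c) :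
    (pushout.inl (prod.map (iX X) (𝟙 I)) (prod.map (𝟙 (zeroth X)) j)).app c a
        = (pushout.inr (prod.map (iX X) (𝟙 I)) (prod.map (𝟙 (zeroth X)) j)).app c b ↔
      ∃ s, (prod.map (iX X) (𝟙 I)).app c s = a ∧ (prod.map (𝟙 (zeroth X)) j).app c s = b :=
  TypeAux.inl_eq_inr_iff (injG hj X c) (ptis I J j X c) a b

lemma inr_eq_inr_app (hj : Mono j) (X : Psh C) (c : Cᵒᵖ)
    (b b' : (zeroth X ⨯ J).obj c)
    (h : (pushout.inr (prod.map (iX X) (𝟙 I)) (prod.map (𝟙 (zeroth X)) j)).app c b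
        = (pushout.inr (prod.map (iX X) (𝟙 I)) (prod.map (𝟙 (zeroth X)) j)).app c b') :
    b = b' ∨ ∃ s s', (prod.map (iX X) (𝟙 I)).app c s = (prod.map (iX X) (𝟙 I)).app c s' ∧
      (prod.map (𝟙 (zeroth X)) j).app c s = b ∧ (prod.map (𝟙 (zeroth X)) j).app c s' = b' :=
  TypeAux.inr_eq_inr (injG hj X c) (ptis I J j X c) b b' h

lemma cyl_elem_cases (X : Psh C) (c : Cᵒᵖ) (z : (cylObj I J j X).obj c) :
    (∃ a, (pushout.inl (prod.map (iX X) (𝟙 I)) (prod.map (𝟙 (zeroth X)) j)).app c a = z) ∨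
    ∃ b, (pushout.inr (prod.map (iX X) (𝟙 I)) (prod.map (𝟙 (zeroth X)) j)).app c b = z :=
  TypeAux.pt_cases (ptis I J j X c) z

end PtPushout

section PullbackAux

/-- Build a limit pullback cone in `Type u` from unique existence of preimage pairs. -/
noncomputable def typePullbackIsLimit {P X Y Z : Type u} (fst : P ⟶ X) (snd : P ⟶ Y)
    (f : X ⟶ Z) (g : Y ⟶ Z) (w : fst ≫ f = snd ≫ g)
    (H : ∀ x y, f x = g y → ∃! p, fst p = x ∧ snd p = y) :
    IsLimit (PullbackCone.mk fst snd w) :=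
  PullbackCone.IsLimit.mk w
    (fun s => TypeCat.ofHom fun z =>
      (H (s.fst z) (s.snd z) (ConcreteCategory.congr_hom s.condition z)).choose)
    (fun s => by ext z; exact
      (H (s.fst z) (s.snd z) (ConcreteCategory.congr_hom s.condition z)).choose_spec.1.1)
    (fun s => by ext z; exact
      (H (s.fst z) (s.snd z) (ConcreteCategory.congr_hom s.condition z)).choose_spec.1.2)
    (fun s m h1 h2 => ConcreteCategory.hom_ext _ _ fun z =>
      (H (s.fst z) (s.snd z) (ConcreteCategory.congr_hom s.condition z)).choose_spec.2 (m z)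
        ⟨ConcreteCategory.congr_hom h1 z, ConcreteCategory.congr_hom h2 z⟩)

/-- A commuting square of presheaves which is a pointwise pullback is a pullback. -/
lemma isPullback_of_pointwise {P X Y Z : Psh C} {fst : P ⟶ X} {snd : P ⟶ Y}
    {f : X ⟶ Z} {g : Y ⟶ Z} (w : fst ≫ f = snd ≫ g)
    (H : ∀ (c : Cᵒᵖ) (x : X.obj c) (y : Y.obj c), f.app c x = g.app c y →
      ∃! p : P.obj c, fst.app c p = x ∧ snd.app c p = y) :
    IsPullback fst snd f g := by
  refine IsPullback.of_isLimit' ⟨w⟩ ?_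
  apply evaluationJointlyReflectsLimits
  intro c
  exact (isLimitMapConePullbackConeEquiv ((evaluation Cᵒᵖ (Type u)).obj c) w).symm
    (typePullbackIsLimit (fst.app c) (snd.app c) (f.app c) (g.app c)
      (NatTrans.congr_app w c) (H c))

/-- Case analysis for elements of a binary coproduct of presheaves. -/
lemma coprod_elem_cases (X Y : Psh C) (c : Cᵒᵖ) (w : (X ⨿ Y).obj c) :
    (∃ x, (coprod.inl (X := X) (Y := Y)).app c x = w) ∨
    ∃ y, (coprod.inr (X := X) (Y := Y)).app c y = w := by
  obtain ⟨⟨k⟩, y, hy⟩ := Types.jointly_surjective (pair X Y ⋙ (evaluation Cᵒᵖ (Type u)).obj c)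
    (isColimitOfPreserves ((evaluation Cᵒᵖ (Type u)).obj c) (colimit.isColimit (pair X Y))) w
  cases k with
  | left => exact Or.inl ⟨y, hy⟩
  | right => exact Or.inr ⟨y, hy⟩

end PullbackAux

section CylElement

variable {I J j}

lemma cylIncl_app (e : ⊤_ (Psh C) ⟶ I) (X : Psh C) (c : Cᵒᵖ) (x : X.obj c) :
    (cylIncl I J j e X).app c x
      = (pushout.inl (prod.map (iX X) (𝟙 I)) (prod.map (𝟙 (zeroth X)) j)).app c
          ((prod.lift (𝟙 X) (terminal.from X ≫ e)).app c x) := rfl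

lemma cylMap_app_inl {X Y : Psh C} (u : X ⟶ Y) (c : Cᵒᵖ) (a : (X ⨯ I).obj c) :
    (cylMap I J j u).app c
        ((pushout.inl (prod.map (iX X) (𝟙 I)) (prod.map (𝟙 (zeroth X)) j)).app c a)
      = (pushout.inl (prod.map (iX Y) (𝟙 I)) (prod.map (𝟙 (zeroth Y)) j)).app c
          ((prod.map u (𝟙 I)).app c a) :=
  inl_desc_apply _ _ _ _ _ c a

lemma cylMap_app_inr {X Y : Psh C} (u : X ⟶ Y) (c : Cᵒᵖ) (b : (zeroth X ⨯ J).obj c) :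
    (cylMap I J j u).app c
        ((pushout.inr (prod.map (iX X) (𝟙 I)) (prod.map (𝟙 (zeroth X)) j)).app c b)
      = (pushout.inr (prod.map (iX Y) (𝟙 I)) (prod.map (𝟙 (zeroth Y)) j)).app c
          ((prod.map (zerothMap u) (𝟙 J)).app c b) :=
  inr_desc_apply _ _ _ _ _ c b

lemma from_app_eq {K L : Psh C} (f : K ⟶ L) (c : Cᵒᵖ) (k : K.obj c) :
    (terminal.from L).app c (f.app c k) = (terminal.from K).app c k :=
  ConcreteCategory.congr_hom (NatTrans.congr_app (terminal.comp_from f) c) k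

lemma iX_nat_apply {K L : Psh C} (f : K ⟶ L) (c : Cᵒᵖ) (s : (zeroth K).obj c) :
    (iX L).app c ((zerothMap f).app c s) = f.app c ((iX K).app c s) :=
  ConcreteCategory.congr_hom (NatTrans.congr_app (iX_natural f) c) s

end CylElement

section Naturality

variable {I J j}

lemma incl_natural {X Y : Psh C} (u : X ⟶ Y) (e : ⊤_ (Psh C) ⟶ I) :
    u ≫ cylIncl I J j e Y = cylIncl I J j e X ≫ (cyl I J j).map u := by
  show u ≫ _ = _ ≫ cylMap I J j u
  dsimp only [cylIncl, cylMap, cylObj]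
  rw [Category.assoc, pushout.inl_desc, ← Category.assoc, ← Category.assoc]
  congr 1
  apply Limits.prod.hom_ext <;> simp [← Category.assoc, terminal.comp_from]

lemma proj_natural {X Y : Psh C} (u : X ⟶ Y) :
    (cyl I J j).map u ≫ cylProj I J j Y = cylProj I J j X ≫ u := by
  show cylMap I J j u ≫ _ = _
  dsimp only [cylMap, cylProj, cylObj]
  apply pushout.hom_ext
  · erw [pushout.inl_desc_assoc, Category.assoc, pushout.inl_desc, pushout.inl_desc_assoc, prod.map_fst]
  · erw [pushout.inr_desc_assoc, Category.assoc, pushout.inr_desc, pushout.inr_desc_assoc, prod.map_fst_assoc, Category.assoc, iX_natural]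

lemma incl_proj (e : ⊤_ (Psh C) ⟶ I) (X : Psh C) :
    cylIncl I J j e X ≫ cylProj I J j X = 𝟙 X := by
  dsimp only [cylIncl, cylProj, cylObj]
  rw [Category.assoc, pushout.inl_desc, prod.lift_fst]

end Naturality

section Colimits

noncomputable instance (X : Type u) : PreservesColimits (Types.binaryProductFunctor.obj X) :=
  letI : PreservesColimits (MonoidalCategory.tensorLeft X) :=
    (Types.tensorProductAdjunction X).leftAdjoint_preservesColimits
  preservesColimits_of_natIso
    (F := MonoidalCategory.tensorLeft X)
    (NatIso.ofComponents (fun Y => Iso.refl _) (by intro Y Z f; ext p; rfl))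

noncomputable instance (X : Type u) : PreservesColimits (prod.functor.obj X) :=
  preservesColimits_of_natIso (Types.binaryProductIsoProd.app X)

noncomputable instance pshProdPreservesColimits (F : Psh C) :
    PreservesColimits (prod.functor.obj F) :=
  FunctorCategory.prod_preservesColimits F

/-- `zeroth` as a functor. -/
noncomputable def zerothF : Psh C ⥤ Psh C where
  obj := zeroth
  map := zerothMap
  map_id X := zerothMap_id X
  map_comp u v := zerothMap_comp u v

noncomputable instance : PreservesColimits (zerothF (C := C)) :=
  preservesColimits_of_natIso
    (F := (evaluation Cᵒᵖ (Type u)).obj (op (⊤_ C)) ⋙ Functor.const Cᵒᵖ)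
    (NatIso.ofComponents (fun X => Iso.refl _)
      (by intro X Y f; simp only [Iso.refl_hom, Category.id_comp, Category.comp_id]; rfl))

/-- The span-diagram functor whose pointwise colimit is `cyl`. -/
noncomputable def spanF : Psh C ⥤ WalkingSpan ⥤ Psh C where
  obj X := span (prod.map (iX X) (𝟙 I)) (prod.map (𝟙 (zeroth X)) j)
  map {X Y} u :=
    { app := fun z =>
        match z with
        | none => prod.map (zerothMap u) (𝟙 I)
        | some WalkingPair.left => prod.map u (𝟙 I)
        | some WalkingPair.right => prod.map (zerothMap u) (𝟙 J)
      naturality := by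
        rintro z₁ z₂ (h : WidePushoutShape.Hom z₁ z₂)
        cases h with
        | id => simp [span_map_id]
        | init k =>
          cases k
          · show (prod.map (iX X) (𝟙 I)) ≫ prod.map u (𝟙 I)
              = prod.map (zerothMap u) (𝟙 I) ≫ prod.map (iX Y) (𝟙 I)
            rw [prod.map_map, prod.map_map, iX_natural, Category.comp_id]
          · show (prod.map (𝟙 (zeroth X)) j) ≫ prod.map (zerothMap u) (𝟙 J)
              = prod.map (zerothMap u) (𝟙 I) ≫ prod.map (𝟙 (zeroth Y)) j
            rw [prod.map_map, prod.map_map]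
            simp }
  map_id X := by
    apply NatTrans.ext
    funext z
    rcases z with _ | k
    · show prod.map (zerothMap (𝟙 X)) (𝟙 I) = _
      rw [zerothMap_id, prod.map_id_id]
      rfl
    · cases k
      · show prod.map (𝟙 X) (𝟙 I) = _
        rw [prod.map_id_id]; rfl
      · show prod.map (zerothMap (𝟙 X)) (𝟙 J) = _
        rw [zerothMap_id, prod.map_id_id]; rfl
  map_comp {X Y Z} u v := by
    apply NatTrans.ext
    funext z
    rcases z with _ | k
    · show prod.map (zerothMap (u ≫ v)) (𝟙 I) = prod.map (zerothMap u) (𝟙 I) ≫ prod.map (zerothMap v) (𝟙 I)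
      rw [zerothMap_comp, prod.map_map, Category.comp_id]
    · cases k
      · show prod.map (u ≫ v) (𝟙 I) = prod.map u (𝟙 I) ≫ prod.map v (𝟙 I)
        rw [prod.map_map, Category.comp_id]
      · show prod.map (zerothMap (u ≫ v)) (𝟙 J) = prod.map (zerothMap u) (𝟙 J) ≫ prod.map (zerothMap v) (𝟙 J)
        rw [zerothMap_comp, prod.map_map, Category.comp_id]

/-- `cyl` is the composite of the span functor with `colim`. -/
noncomputable def cylIsoSpanColim : spanF I J j ⋙ colim ≅ cyl I J j :=
  NatIso.ofComponents (fun X => Iso.refl _) (by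
    intro X Y u
    simp only [Iso.refl_hom, Category.comp_id, Category.id_comp]
    show colimMap _ = cylMap I J j u
    apply pushout.hom_ext
    · rw [show pushout.inl (prod.map (iX X) (𝟙 I)) (prod.map (𝟙 (zeroth X)) j)
          = colimit.ι (span _ _) WalkingSpan.left from rfl]
      erw [ι_colimMap]
      show prod.map u (𝟙 I) ≫ _ = _
      erw [cylMap, pushout.inl_desc]; rfl
    · rw [show pushout.inr (prod.map (iX X) (𝟙 I)) (prod.map (𝟙 (zeroth X)) j)
          = colimit.ι (span _ _) WalkingSpan.right from rfl]
      erw [ι_colimMap]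
      show prod.map (zerothMap u) (𝟙 J) ≫ _ = _
      erw [cylMap, pushout.inr_desc]; rfl)

noncomputable def spanFPreservesColimits : PreservesColimitsOfSize.{u, u} (spanF I J j) := by
  apply preservesColimits_of_evaluation
  intro k
  rcases k with _ | k
  · exact preservesColimits_of_natIso
      (F := zerothF ⋙ prod.functor.obj I)
      (NatIso.ofComponents (fun X => prod.braiding I (zeroth X))
        (by intro X Y u
            show prod.map (𝟙 I) (zerothMap u) ≫ _ = _ ≫ prod.map (zerothMap u) (𝟙 I)
            rw [braid_natural]))
  · cases k
    · exact preservesColimits_of_natIso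
        (F := prod.functor.obj I)
        (NatIso.ofComponents (fun X => prod.braiding I X)
          (by intro X Y u
              show prod.map (𝟙 I) u ≫ _ = _ ≫ prod.map u (𝟙 I)
              rw [braid_natural]))
    · exact preservesColimits_of_natIso
        (F := zerothF ⋙ prod.functor.obj J)
        (NatIso.ofComponents (fun X => prod.braiding J (zeroth X))
          (by intro X Y u
              show prod.map (𝟙 J) (zerothMap u) ≫ _ = _ ≫ prod.map (zerothMap u) (𝟙 J)
              rw [braid_natural]))

noncomputable def cylPreservesColimits : PreservesColimitsOfSize.{u, u} (cyl I J j) :=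
  letI := spanFPreservesColimits I J j
  preservesColimits_of_natIso (cylIsoSpanColim I J j)

end Colimits

section MainHelpers

variable {I J j}

lemma coprod_inl_desc_apply {X Y T : Psh C} (h : X ⟶ T) (k : Y ⟶ T) (c : Cᵒᵖ) (x : X.obj c) :
    (coprod.desc h k).app c ((coprod.inl (X := X) (Y := Y)).app c x) = h.app c x :=
  ConcreteCategory.congr_hom (NatTrans.congr_app (coprod.inl_desc h k) c) x

lemma coprod_inr_desc_apply {X Y T : Psh C} (h : X ⟶ T) (k : Y ⟶ T) (c : Cᵒᵖ) (y : Y.obj c) :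
    (coprod.desc h k).app c ((coprod.inr (X := X) (Y := Y)).app c y) = k.app c y :=
  ConcreteCategory.congr_hom (NatTrans.congr_app (coprod.inr_desc h k) c) y

lemma cylmap_eq {X Y : Psh C} (u : X ⟶ Y) : (cyl I J j).map u = cylMap I J j u := rfl

/-- Key lemma: if the images (under `cylMap f`) of an `inl`-element and an `inr`-element
agree, then the elements already agree in the cylinder of the source. -/
lemma inl_eq_inr_of_map (hj : Mono j) {K L : Psh C} (f : K ⟶ L)
    (hfc : ∀ c : Cᵒᵖ, Function.Injective (f.app c)) (c : Cᵒᵖ)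
    (a : (K ⨯ I).obj c) (b : (zeroth K ⨯ J).obj c)
    (h : (pushout.inl (prod.map (iX L) (𝟙 I)) (prod.map (𝟙 (zeroth L)) j)).app c
            ((prod.map f (𝟙 I)).app c a)
        = (pushout.inr (prod.map (iX L) (𝟙 I)) (prod.map (𝟙 (zeroth L)) j)).app c
            ((prod.map (zerothMap f) (𝟙 J)).app c b)) :
    (pushout.inl (prod.map (iX K) (𝟙 I)) (prod.map (𝟙 (zeroth K)) j)).app c a
      = (pushout.inr (prod.map (iX K) (𝟙 I)) (prod.map (𝟙 (zeroth K)) j)).app c b := by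
  obtain ⟨s, hs1, hs2⟩ := (inl_eq_inr_iff_app hj L c _ _).1 h
  obtain ⟨σ, hσ1, hσ2⟩ := prod_elem_mk ((prod.fst (X := zeroth K) (Y := J)).app c b)
      ((prod.snd (X := K) (Y := I)).app c a)
  have hb0 : (prod.fst (X := zeroth L) (Y := I)).app c s
      = (zerothMap f).app c ((prod.fst (X := zeroth K) (Y := J)).app c b) := by
    have h2 := congr_arg ((prod.fst (X := zeroth L) (Y := J)).app c) hs2
    rw [map_fst_apply, map_fst_apply] at h2
    simpa using h2
  have hsnd_s : (prod.snd (X := zeroth L) (Y := I)).app c s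
      = (prod.snd (X := K) (Y := I)).app c a := by
    have h2 := congr_arg ((prod.snd (X := L) (Y := I)).app c) hs1
    rw [map_snd_apply, map_snd_apply] at h2
    simpa using h2
  have hFa : (prod.map (iX K) (𝟙 I)).app c σ = a := by
    refine prod_elem_ext ?_ ?_
    · rw [map_fst_apply, hσ1]
      apply hfc c
      rw [← iX_nat_apply, ← hb0]
      have h1 := congr_arg ((prod.fst (X := L) (Y := I)).app c) hs1
      rw [map_fst_apply, map_fst_apply] at h1
      exact h1
    · rw [map_snd_apply, hσ2]
      rfl
  have hGb : (prod.map (𝟙 (zeroth K)) j).app c σ = b := by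
    refine prod_elem_ext ?_ ?_
    · rw [map_fst_apply, hσ1]
      rfl
    · rw [map_snd_apply, hσ2]
      have h2 := congr_arg ((prod.snd (X := zeroth L) (Y := J)).app c) hs2
      rw [map_snd_apply, map_snd_apply] at h2
      rw [← hsnd_s, h2]
      rfl
  rw [← hFa, ← hGb]
  exact pushout_cond_apply _ _ c σ

end MainHelpers

/-- If `I` is a separating interval (with points `e₀`, `e₁`) and
`j : I ⟶ J` is a monomorphism of intervals, then `𝒥`, together with `∂⁰`, `∂¹`
and `σ`, is a functorial cylinder which is an elementary homotopical datum:

* `∂⁰`, `∂¹` and `σ` are natural, `σ_X ∘ ∂^ε_X = id` and `(∂⁰_X, ∂¹_X) : X ⊔ X ⟶ 𝒥(X)`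
  is a monomorphism (functorial cylinder);
* (HD1) `𝒥` preserves small colimits and monomorphisms;
* (HD2) for every monomorphism `K ⟶ L` the naturality squares of `∂⁰` and `∂¹`
  are pullbacks. -/
theorem cyl_is_elementary_homotopical_datum
    (e₀ e₁ : ⊤_ (Psh C) ⟶ I)
    (sep : ∀ (c : Cᵒᵖ) (u v : (⊤_ (Psh C)).obj c), e₀.app c u ≠ e₁.app c v)
    (hj : Mono j) :
    -- naturality of the structure maps
    (∀ {X Y : Psh C} (u : X ⟶ Y) (e : ⊤_ (Psh C) ⟶ I),
        u ≫ cylIncl I J j e Y = cylIncl I J j e X ≫ (cyl I J j).map u) ∧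
    (∀ {X Y : Psh C} (u : X ⟶ Y),
        (cyl I J j).map u ≫ cylProj I J j Y = cylProj I J j X ≫ u) ∧
    -- cylinder axioms
    (∀ X : Psh C, cylIncl I J j e₀ X ≫ cylProj I J j X = 𝟙 X) ∧
    (∀ X : Psh C, cylIncl I J j e₁ X ≫ cylProj I J j X = 𝟙 X) ∧
    (∀ X : Psh C, Mono (coprod.desc (cylIncl I J j e₀ X) (cylIncl I J j e₁ X))) ∧
    -- (HD1): `𝒥` preserves small colimits and monomorphisms
    Nonempty (PreservesColimitsOfSize.{u, u} (cyl I J j)) ∧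
    (∀ {K L : Psh C} (f : K ⟶ L), Mono f → Mono ((cyl I J j).map f)) ∧
    -- (HD2): the naturality squares of `∂⁰` and `∂¹` at a monomorphism are pullbacks
    (∀ {K L : Psh C} (f : K ⟶ L), Mono f → ∀ e ∈ ({e₀, e₁} : Set (⊤_ (Psh C) ⟶ I)),
        IsPullback f (cylIncl I J j e K) (cylIncl I J j e L) ((cyl I J j).map f)) := by
  have finj : ∀ {K L : Psh C} (f : K ⟶ L), Mono f → ∀ c : Cᵒᵖ, Function.Injective (f.app c) :=
    fun f hf c => (mono_iff_injective _).1 ((NatTrans.mono_iff_mono_app f).1 hf c)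
  refine ⟨fun u e => incl_natural u e, fun u => proj_natural u,
    fun X => incl_proj e₀ X, fun X => incl_proj e₁ X, ?_, ⟨cylPreservesColimits I J j⟩, ?_, ?_⟩
  · -- (∂⁰, ∂¹) is a monomorphism
    intro X
    rw [NatTrans.mono_iff_mono_app]
    intro c
    rw [mono_iff_injective]
    intro z z' hzz
    obtain ⟨x, rfl⟩ | ⟨x, rfl⟩ := coprod_elem_cases X X c z <;>
      obtain ⟨x', rfl⟩ | ⟨x', rfl⟩ := coprod_elem_cases X X c z'
    · rw [coprod_inl_desc_apply, coprod_inl_desc_apply, cylIncl_app, cylIncl_app] at hzz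
      have h1 := inl_app_injective hj X c hzz
      have h2 := congr_arg ((prod.fst (X := X) (Y := I)).app c) h1
      rw [lift_fst_apply, lift_fst_apply] at h2
      have hx : x = x' := h2
      rw [hx]
    · rw [coprod_inl_desc_apply, coprod_inr_desc_apply, cylIncl_app, cylIncl_app] at hzz
      have h1 := inl_app_injective hj X c hzz
      have h2 := congr_arg ((prod.snd (X := X) (Y := I)).app c) h1
      rw [lift_snd_apply, lift_snd_apply] at h2
      exact absurd h2 (sep c _ _)
    · rw [coprod_inr_desc_apply, coprod_inl_desc_apply, cylIncl_app, cylIncl_app] at hzz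
      have h1 := inl_app_injective hj X c hzz
      have h2 := congr_arg ((prod.snd (X := X) (Y := I)).app c) h1
      rw [lift_snd_apply, lift_snd_apply] at h2
      exact absurd h2.symm (sep c _ _)
    · rw [coprod_inr_desc_apply, coprod_inr_desc_apply, cylIncl_app, cylIncl_app] at hzz
      have h1 := inl_app_injective hj X c hzz
      have h2 := congr_arg ((prod.fst (X := X) (Y := I)).app c) h1
      rw [lift_fst_apply, lift_fst_apply] at h2
      have hx : x = x' := h2
      rw [hx]
  · -- 𝒥 preserves monomorphisms
    intro K L f hf
    have hfc := finj f hf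
    change Mono (cylMap I J j f)
    refine (NatTrans.mono_iff_mono_app _).2 ?_
    intro c
    rw [mono_iff_injective]
    intro z z' hzz
    obtain ⟨a, rfl⟩ | ⟨b, rfl⟩ := cyl_elem_cases K c z <;>
      obtain ⟨a', rfl⟩ | ⟨b', rfl⟩ := cyl_elem_cases K c z'
    · rw [cylMap_app_inl, cylMap_app_inl] at hzz
      have h1 := inl_app_injective hj L c hzz
      have hfst := congr_arg ((prod.fst (X := L) (Y := I)).app c) h1
      rw [map_fst_apply, map_fst_apply] at hfst
      have hsnd := congr_arg ((prod.snd (X := L) (Y := I)).app c) h1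
      rw [map_snd_apply, map_snd_apply] at hsnd
      have ha : a = a' := prod_elem_ext (hfc c hfst) (by simpa using hsnd)
      rw [ha]
    · rw [cylMap_app_inl, cylMap_app_inr] at hzz
      exact inl_eq_inr_of_map hj f hfc c a b' hzz
    · rw [cylMap_app_inr, cylMap_app_inl] at hzz
      exact (inl_eq_inr_of_map hj f hfc c a' b hzz.symm).symm
    · rw [cylMap_app_inr, cylMap_app_inr] at hzz
      rcases inr_eq_inr_app hj L c _ _ hzz with heq | ⟨s, s', h1, h2, h3⟩
      · have hfst := congr_arg ((prod.fst (X := zeroth L) (Y := J)).app c) heq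
        rw [map_fst_apply, map_fst_apply] at hfst
        have hsnd := congr_arg ((prod.snd (X := zeroth L) (Y := J)).app c) heq
        rw [map_snd_apply, map_snd_apply] at hsnd
        have hb : b = b' := prod_elem_ext (hfc (op (⊤_ C)) hfst) (by simpa using hsnd)
        rw [hb]
      · -- components of h1, h2, h3
        have h2fst := congr_arg ((prod.fst (X := zeroth L) (Y := J)).app c) h2
        rw [map_fst_apply, map_fst_apply] at h2fst
        have h2snd := congr_arg ((prod.snd (X := zeroth L) (Y := J)).app c) h2
        rw [map_snd_apply, map_snd_apply] at h2snd
        have h3fst := congr_arg ((prod.fst (X := zeroth L) (Y := J)).app c) h3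
        rw [map_fst_apply, map_fst_apply] at h3fst
        have h3snd := congr_arg ((prod.snd (X := zeroth L) (Y := J)).app c) h3
        rw [map_snd_apply, map_snd_apply] at h3snd
        have h1fst := congr_arg ((prod.fst (X := L) (Y := I)).app c) h1
        rw [map_fst_apply, map_fst_apply] at h1fst
        have h1snd := congr_arg ((prod.snd (X := L) (Y := I)).app c) h1
        rw [map_snd_apply, map_snd_apply] at h1snd
        obtain ⟨σ, hσ1, hσ2⟩ := prod_elem_mk (X := zeroth K) (Y := I)
          ((prod.fst (X := zeroth K) (Y := J)).app c b)
          ((prod.snd (X := zeroth L) (Y := I)).app c s)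
        obtain ⟨σ', hσ1', hσ2'⟩ := prod_elem_mk (X := zeroth K) (Y := I)
          ((prod.fst (X := zeroth K) (Y := J)).app c b')
          ((prod.snd (X := zeroth L) (Y := I)).app c s)
        have hkey : (iX K).app c ((prod.fst (X := zeroth K) (Y := J)).app c b)
            = (iX K).app c ((prod.fst (X := zeroth K) (Y := J)).app c b') := by
          apply hfc c
          rw [← iX_nat_apply, ← iX_nat_apply]
          have e1 : (zerothMap f).app c ((prod.fst (X := zeroth K) (Y := J)).app c b)
              = (prod.fst (X := zeroth L) (Y := I)).app c s := by
            rw [← h2fst]; rfl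
          have e2 : (zerothMap f).app c ((prod.fst (X := zeroth K) (Y := J)).app c b')
              = (prod.fst (X := zeroth L) (Y := I)).app c s' := by
            rw [← h3fst]; rfl
          rw [e1, e2]
          exact h1fst
        have hF : (prod.map (iX K) (𝟙 I)).app c σ = (prod.map (iX K) (𝟙 I)).app c σ' := by
          refine prod_elem_ext ?_ ?_
          · rw [map_fst_apply, map_fst_apply, hσ1, hσ1']
            exact hkey
          · rw [map_snd_apply, map_snd_apply, hσ2, hσ2']
        have hG : (prod.map (𝟙 (zeroth K)) j).app c σ = b := by
          refine prod_elem_ext ?_ ?_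
          · rw [map_fst_apply, hσ1]; rfl
          · rw [map_snd_apply, hσ2, h2snd]; rfl
        have hG' : (prod.map (𝟙 (zeroth K)) j).app c σ' = b' := by
          refine prod_elem_ext ?_ ?_
          · rw [map_fst_apply, hσ1']; rfl
          · rw [map_snd_apply, hσ2']
            have h1snd' : (prod.snd (X := zeroth L) (Y := I)).app c s
                = (prod.snd (X := zeroth L) (Y := I)).app c s' := h1snd
            rw [h1snd', h3snd]; rfl
        calc (pushout.inr (prod.map (iX K) (𝟙 I)) (prod.map (𝟙 (zeroth K)) j)).app c b
            = (pushout.inr (prod.map (iX K) (𝟙 I)) (prod.map (𝟙 (zeroth K)) j)).app c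
                ((prod.map (𝟙 (zeroth K)) j).app c σ) := by rw [hG]
          _ = (pushout.inl (prod.map (iX K) (𝟙 I)) (prod.map (𝟙 (zeroth K)) j)).app c
                ((prod.map (iX K) (𝟙 I)).app c σ) := (pushout_cond_apply _ _ c σ).symm
          _ = (pushout.inl (prod.map (iX K) (𝟙 I)) (prod.map (𝟙 (zeroth K)) j)).app c
                ((prod.map (iX K) (𝟙 I)).app c σ') := by rw [hF]
          _ = (pushout.inr (prod.map (iX K) (𝟙 I)) (prod.map (𝟙 (zeroth K)) j)).app c
                ((prod.map (𝟙 (zeroth K)) j).app c σ') := pushout_cond_apply _ _ c σ'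
          _ = (pushout.inr (prod.map (iX K) (𝟙 I)) (prod.map (𝟙 (zeroth K)) j)).app c b' := by
                rw [hG']
  · -- HD2
    intro K L f hf e he
    have hfc := finj f hf
    refine isPullback_of_pointwise (incl_natural f e) ?_
    intro c l z hlz
    change _ = (cylMap I J j f).app c z at hlz
    have uniqpart : ∀ k k' : K.obj c, f.app c k = l → f.app c k' = l → k = k' :=
      fun k k' h h' => hfc c (h.trans h'.symm)
    obtain ⟨a, rfl⟩ | ⟨b, rfl⟩ := cyl_elem_cases K c z
    · rw [cylIncl_app, cylMap_app_inl] at hlz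
      have h1 := inl_app_injective hj L c hlz
      have hfk : f.app c ((prod.fst (X := K) (Y := I)).app c a) = l := by
        have h2 := congr_arg ((prod.fst (X := L) (Y := I)).app c) h1
        rw [lift_fst_apply, map_fst_apply] at h2
        exact h2.symm
      refine ⟨(prod.fst (X := K) (Y := I)).app c a, ⟨hfk, ?_⟩,
        fun k' hh => uniqpart k' _ hh.1 hfk⟩
      rw [cylIncl_app]
      refine congr_arg _ (prod_elem_ext ?_ ?_)
      · rw [lift_fst_apply]; rfl
      · rw [lift_snd_apply]
        have h2 := congr_arg ((prod.snd (X := L) (Y := I)).app c) h1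
        rw [lift_snd_apply, map_snd_apply] at h2
        show e.app c ((terminal.from K).app c ((prod.fst (X := K) (Y := I)).app c a))
          = (prod.snd (X := K) (Y := I)).app c a
        rw [← from_app_eq f c, hfk]
        exact h2
    · rw [cylIncl_app, cylMap_app_inr] at hlz
      obtain ⟨s, hs1, hs2⟩ := (inl_eq_inr_iff_app hj L c _ _).1 hlz
      have hfst_s : (prod.fst (X := zeroth L) (Y := I)).app c s
          = (zerothMap f).app c ((prod.fst (X := zeroth K) (Y := J)).app c b) := by
        have h2 := congr_arg ((prod.fst (X := zeroth L) (Y := J)).app c) hs2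
        rw [map_fst_apply, map_fst_apply] at h2
        simpa using h2
      have hfk : f.app c ((iX K).app c ((prod.fst (X := zeroth K) (Y := J)).app c b)) = l := by
        rw [← iX_nat_apply, ← hfst_s]
        have h1 := congr_arg ((prod.fst (X := L) (Y := I)).app c) hs1
        rw [map_fst_apply, lift_fst_apply] at h1
        exact h1
      have hterm : (terminal.from L).app c l = (terminal.from K).app c
          ((iX K).app c ((prod.fst (X := zeroth K) (Y := J)).app c b)) := by
        rw [← hfk, from_app_eq]
      obtain ⟨σ, hσ1, hσ2⟩ := prod_elem_mk (X := zeroth K) (Y := I)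
        ((prod.fst (X := zeroth K) (Y := J)).app c b)
        (e.app c ((terminal.from K).app c
          ((iX K).app c ((prod.fst (X := zeroth K) (Y := J)).app c b))))
      have hsnd_s : (prod.snd (X := zeroth L) (Y := I)).app c s
          = e.app c ((terminal.from K).app c
              ((iX K).app c ((prod.fst (X := zeroth K) (Y := J)).app c b))) := by
        have h1 := congr_arg ((prod.snd (X := L) (Y := I)).app c) hs1
        rw [map_snd_apply, lift_snd_apply] at h1
        have h1' : (prod.snd (X := zeroth L) (Y := I)).app c s
            = e.app c ((terminal.from L).app c l) := h1
        rw [h1', hterm]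
      have hF : (prod.map (iX K) (𝟙 I)).app c σ
          = (prod.lift (𝟙 K) (terminal.from K ≫ e)).app c
              ((iX K).app c ((prod.fst (X := zeroth K) (Y := J)).app c b)) := by
        refine prod_elem_ext ?_ ?_
        · rw [map_fst_apply, lift_fst_apply, hσ1]; rfl
        · rw [map_snd_apply, lift_snd_apply, hσ2]; rfl
      have hG : (prod.map (𝟙 (zeroth K)) j).app c σ = b := by
        refine prod_elem_ext ?_ ?_
        · rw [map_fst_apply, hσ1]; rfl
        · rw [map_snd_apply, hσ2]
          have h2 := congr_arg ((prod.snd (X := zeroth L) (Y := J)).app c) hs2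
          rw [map_snd_apply, map_snd_apply] at h2
          rw [← hsnd_s, h2]; rfl
      refine ⟨(iX K).app c ((prod.fst (X := zeroth K) (Y := J)).app c b), ⟨hfk, ?_⟩,
        fun k' hh => uniqpart k' _ hh.1 hfk⟩
      rw [cylIncl_app, ← hF, ← hG]
      exact pushout_cond_apply _ _ c σ

end Paper
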